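/- Let k = f·f′ be an odd positive integer with 1 < f < k. If there exist coprime integers x, y with x² − (k²+1)y² = f′², then f < f′. -/

import Mathlib

lemma key_descent (k c : ℤ) (hk : 0 < k) (hc1 : 1 < c) (hck : c ≤ k) :
    ∀ n : ℕ, ∀ x y : ℤ, y.natAbs = n → IsCoprime x y →
      x ^ 2 - (k ^ 2 + 1) * y ^ 2 = c → False := by
  intro n
  induction n using Nat.strong_induction_on with
  | _ n ih =>
    intro x y hn hcop heq
    set a : ℤ := (x.natAbs : ℤ) with ha_def
    set b : ℤ := (y.natAbs : ℤ) with hb_def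
    have ha2 : a ^ 2 = x ^ 2 := by rw [ha_def, ← Int.abs_eq_natAbs, sq_abs]
    have hb2 : b ^ 2 = y ^ 2 := by rw [hb_def, ← Int.abs_eq_natAbs, sq_abs]
    have ha0 : 0 ≤ a := by positivity
    have hb0 : 0 ≤ b := by positivity
    have hcop' : IsCoprime a b := by
      rw [Int.isCoprime_iff_gcd_eq_one] at hcop ⊢
      simpa [Int.gcd, ha_def, hb_def, Int.natAbs_abs] using hcop
    have heq' : a ^ 2 - (k ^ 2 + 1) * b ^ 2 = c := by rw [ha2, hb2]; exact heq
    have hbn : b = (n : ℤ) := by rw [hb_def, hn]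
    by_cases hb : b = 0
    · -- then a is a unit, c = 1, contradiction
      rw [hb] at hcop' heq'
      have := isCoprime_zero_right.mp hcop'
      rcases Int.isUnit_iff.mp this with h | h <;> rw [h] at heq' <;> simp at heq' <;>
        omega
    · have hb1 : 1 ≤ b := by omega
      have hakb : k * b < a := by
        by_contra h
        push_neg at h
        have h1 : a * a ≤ (k * b) * (k * b) := mul_self_le_mul_self ha0 h
        have h1' : a ^ 2 ≤ k ^ 2 * b ^ 2 := by
          calc a ^ 2 = a * a := by ring
            _ ≤ (k * b) * (k * b) := h1
            _ = k ^ 2 * b ^ 2 := by ring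
        linarith [sq_nonneg b]
      by_cases hbig : (k ^ 2 + 1) * c < a ^ 2
      · -- descent step
        set X : ℤ := (2 * k ^ 2 + 1) * a - 2 * k * (k ^ 2 + 1) * b with hX
        set Y : ℤ := (2 * k ^ 2 + 1) * b - 2 * k * a with hY
        have hnorm : X ^ 2 - (k ^ 2 + 1) * Y ^ 2 = c := by
          rw [hX, hY]; linear_combination heq'
        have hcopXY : IsCoprime X Y := by
          obtain ⟨u, v, huv⟩ := hcop'
          exact ⟨u * (2 * k ^ 2 + 1) + v * (2 * k),
                 u * (2 * k * (k ^ 2 + 1)) + v * (2 * k ^ 2 + 1), by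
            rw [hX, hY]; linear_combination huv⟩
        have hYlt : Y < b := by
          rw [hY]
          linarith [mul_lt_mul_of_pos_left hakb (by positivity : (0:ℤ) < 2 * k)]
        have hYgt : -b < Y := by
          by_contra hcon
          push_neg at hcon
          rw [hY] at hcon
          have h3 : (k ^ 2 + 1) * b ≤ k * a := by linarith
          have h2 : ((k ^ 2 + 1) * b) * ((k ^ 2 + 1) * b) ≤ (k * a) * (k * a) :=
            mul_self_le_mul_self (by positivity) h3
          have h5 : a ^ 2 - c = (k ^ 2 + 1) * b ^ 2 := by linarith
          have h6 : (k ^ 2 + 1) * (a ^ 2 - c) ≤ k ^ 2 * a ^ 2 := by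
            have he : (k ^ 2 + 1) * (a ^ 2 - c) = ((k ^ 2 + 1) * b) * ((k ^ 2 + 1) * b) := by
              rw [h5]; ring
            rw [he]
            calc ((k ^ 2 + 1) * b) * ((k ^ 2 + 1) * b) ≤ (k * a) * (k * a) := h2
              _ = k ^ 2 * a ^ 2 := by ring
          linarith
        have hmeas : Y.natAbs < n := by
          rw [hbn] at hYlt hYgt
          omega
        exact ih Y.natAbs hmeas X Y rfl hcopXY hnorm
      · -- small case: a² strictly between consecutive squares: contradiction
        push_neg at hbig
        have hbc : b ^ 2 < c := by
          by_contra hcb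
          push_neg at hcb
          have := mul_le_mul_of_nonneg_left hcb (by positivity : (0:ℤ) ≤ k ^ 2 + 1)
          linarith
        have hkb : 0 < k * b := mul_pos hk (by omega)
        have hstep : k * b + 1 ≤ a := hakb
        have h1 : (k * b + 1) ^ 2 ≤ a ^ 2 := by
          calc (k * b + 1) ^ 2 = (k * b + 1) * (k * b + 1) := by ring
            _ ≤ a * a := mul_self_le_mul_self (by linarith) hstep
            _ = a ^ 2 := by ring
        linarith [mul_nonneg hk.le (sub_nonneg.mpr hb1)]

theorem stmt_3 (k f f' : ℤ) (hk : 0 < k) (hodd : Odd k) (hkff : k = f * f')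
    (hf1 : 1 < f) (hfk : f < k) (x y : ℤ) (hxy : IsCoprime x y)
    (heq : x ^ 2 - (k ^ 2 + 1) * y ^ 2 = f' ^ 2) :
    f < f' := by
  have hf0 : 0 < f := by linarith
  have hf'0 : 0 < f' := by nlinarith
  have hf'1 : 1 < f' := by nlinarith
  by_contra hle
  push_neg at hle
  have hck : f' ^ 2 ≤ k := by nlinarith
  have hc1 : 1 < f' ^ 2 := by nlinarith
  exact key_descent k (f' ^ 2) hk hc1 hck y.natAbs x y rfl hxy heq
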